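/- Let X = {-1,1}^ℕ and let μ⁺, μ⁻ be Borel probability measures on X such that ∫ f dμ⁻ ≤ ∫ f dμ⁺ for every continuous increasing f. If ∫ x_i dμ⁺(x) = ∫ x_i dμ⁻(x) for every i ∈ ℕ, then μ⁺ = μ⁻. -/

import Mathlib

open MeasureTheory

/-- The symbolic space `{-1,1}^ℕ`, with `true ↔ 1` and `false ↔ -1`. -/
abbrev Xsp : Type := ℕ → Bool

/-- The spin value of a symbol. -/
noncomputable def spin (b : Bool) : ℝ := if b then 1 else -1

noncomputable def spin01 (b : Bool) : ℝ := if b then 1 else 0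

lemma spin_mono : Monotone spin := by
  intro a b h
  cases a <;> cases b
  · exact le_refl _
  · norm_num [spin]
  · exact absurd h (by decide)
  · exact le_refl _

lemma spin01_mono : Monotone spin01 := by
  intro a b h
  cases a <;> cases b
  · exact le_refl _
  · norm_num [spin01]
  · exact absurd h (by decide)
  · exact le_refl _

lemma spin01_nonneg (b : Bool) : 0 ≤ spin01 b := by cases b <;> simp [spin01]

lemma spin01_le_one (b : Bool) : spin01 b ≤ 1 := by cases b <;> simp [spin01]

def cyl (B : Finset ℕ) : Set Xsp := {x | ∀ i ∈ B, x i = true}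

lemma mem_cyl {B : Finset ℕ} {x : Xsp} : x ∈ cyl B ↔ ∀ i ∈ B, x i = true := Iff.rfl

noncomputable def indC (B : Finset ℕ) (x : Xsp) : ℝ := ∏ i ∈ B, spin01 (x i)

lemma indC_eq_one {B : Finset ℕ} {x : Xsp} (h : ∀ i ∈ B, x i = true) :
    indC B x = 1 := by
  unfold indC
  exact Finset.prod_eq_one fun i hi => by simp [spin01, h i hi]

lemma indC_eq_zero {B : Finset ℕ} {x : Xsp} {i : ℕ} (hi : i ∈ B) (h : x i = false) :
    indC B x = 0 :=
  Finset.prod_eq_zero hi (by simp [spin01, h])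

lemma indC_nonneg (B : Finset ℕ) (x : Xsp) : 0 ≤ indC B x :=
  Finset.prod_nonneg fun i _ => spin01_nonneg _

lemma indC_le_one (B : Finset ℕ) (x : Xsp) : indC B x ≤ 1 :=
  Finset.prod_le_one (fun i _ => spin01_nonneg _) (fun i _ => spin01_le_one _)

lemma indC_mono (B : Finset ℕ) : Monotone (indC B) := by
  intro x y hxy
  exact Finset.prod_le_prod (fun i _ => spin01_nonneg _)
    (fun i _ => spin01_mono (hxy i))

lemma continuous_spin_apply (i : ℕ) : Continuous fun x : Xsp => spin (x i) :=
  (continuous_of_discreteTopology (f := spin)).comp (continuous_apply i)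

lemma continuous_indC (B : Finset ℕ) : Continuous (indC B) :=
  continuous_finset_prod B fun i _ =>
    (continuous_of_discreteTopology (f := spin01)).comp (continuous_apply i)

lemma indC_eq_indicator (B : Finset ℕ) (x : Xsp) :
    indC B x = (cyl B).indicator (fun _ => (1:ℝ)) x := by
  by_cases h : ∀ i ∈ B, x i = true
  · rw [indC_eq_one h, Set.indicator_of_mem (mem_cyl.mpr h)]
  · push_neg at h
    obtain ⟨i, hi, hxi⟩ := h
    rw [indC_eq_zero hi (Bool.not_eq_true _ |>.mp hxi),
      Set.indicator_of_notMem (fun hm => hxi (mem_cyl.mp hm i hi))]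

lemma measurableSet_cyl (B : Finset ℕ) : MeasurableSet (cyl B) := by
  have : cyl B = ⋂ i ∈ B, (fun x : Xsp => x i) ⁻¹' {true} := by
    ext x; simp [cyl]
  rw [this]
  exact MeasurableSet.biInter (B : Set ℕ).to_countable
    (fun i _ => (measurable_pi_apply i) (measurableSet_singleton true))

lemma f2_mono (B : Finset ℕ) :
    Monotone (fun x : Xsp => (∑ i ∈ B, spin (x i)) - 2 * indC B x) := by
  intro x y hxy
  dsimp only
  have hsum : ∑ i ∈ B, spin (x i) ≤ ∑ i ∈ B, spin (y i) :=
    Finset.sum_le_sum fun i _ => spin_mono (hxy i)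
  by_cases hx : ∀ i ∈ B, x i = true
  · have hy : ∀ i ∈ B, y i = true := fun i hi => by
      have h := hxy i
      rw [hx i hi] at h
      exact le_antisymm (Bool.le_true _) h
    simp only [indC_eq_one hx, indC_eq_one hy]
    linarith
  · push_neg at hx
    obtain ⟨i0, hi0, hxi0⟩ := hx
    have hxi0' : x i0 = false := Bool.not_eq_true _ |>.mp hxi0
    rw [indC_eq_zero hi0 hxi0']
    cases hyi : y i0 with
    | false =>
      rw [indC_eq_zero hi0 hyi]
      linarith
    | true =>
      have h2le : (2:ℝ) ≤ ∑ i ∈ B, (spin (y i) - spin (x i)) := by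
        have h := Finset.single_le_sum (f := fun i => spin (y i) - spin (x i))
          (fun i _ => sub_nonneg.2 (spin_mono (hxy i))) hi0
        have hs : spin (y i0) - spin (x i0) = 2 := by norm_num [spin, hyi, hxi0']
        linarith
      rw [Finset.sum_sub_distrib] at h2le
      have := indC_le_one B y
      have := indC_nonneg B y
      linarith

theorem eq_of_stochastic_domination_and_equal_coordinates
    (mup mum : Measure Xsp) [IsProbabilityMeasure mup] [IsProbabilityMeasure mum]
    (hdom : ∀ f : Xsp → ℝ, Continuous f → Monotone f →
      ∫ x, f x ∂mum ≤ ∫ x, f x ∂mup)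
    (hcoord : ∀ i : ℕ, ∫ x, spin (x i) ∂mup = ∫ x, spin (x i) ∂mum) :
    mup = mum := by
  have hint : ∀ (μ : Measure Xsp) [IsFiniteMeasure μ] (f : Xsp → ℝ),
      Continuous f → Integrable f μ := fun μ _ f hf =>
    hf.integrable_of_hasCompactSupport (HasCompactSupport.of_compactSpace f)
  -- integral of indC equals measure of cylinder
  have hind : ∀ (μ : Measure Xsp) (B : Finset ℕ),
      ∫ x, indC B x ∂μ = (μ (cyl B)).toReal := by
    intro μ B
    rw [show (fun x => indC B x) = fun x => (cyl B).indicator (fun _ => (1:ℝ)) x from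
      funext (indC_eq_indicator B), integral_indicator_const (1:ℝ) (measurableSet_cyl B),
      smul_eq_mul, mul_one]
    rfl
  have key : ∀ B : Finset ℕ, mup (cyl B) = mum (cyl B) := by
    intro B
    have hc2 : Continuous (fun x : Xsp => (∑ i ∈ B, spin (x i)) - 2 * indC B x) :=
      (continuous_finset_sum B fun i _ => continuous_spin_apply i).sub
        (continuous_const.mul (continuous_indC B))
    have h1 := hdom (indC B) (continuous_indC B) (indC_mono B)
    have h2 := hdom _ hc2 (f2_mono B)
    have heval : ∀ (μ : Measure Xsp) [IsProbabilityMeasure μ],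
        ∫ x, ((∑ i ∈ B, spin (x i)) - 2 * indC B x) ∂μ
          = (∑ i ∈ B, ∫ x, spin (x i) ∂μ) - 2 * ∫ x, indC B x ∂μ := by
      intro μ _
      rw [integral_sub (hint μ _ (continuous_finset_sum B fun i _ => continuous_spin_apply i))
        (hint μ (fun x => 2 * indC B x) (continuous_const.mul (continuous_indC B))),
        integral_finset_sum B (fun i _ => hint μ _ (continuous_spin_apply i)),
        integral_const_mul]
    rw [heval mup, heval mum] at h2
    have hsums : ∑ i ∈ B, ∫ x, spin (x i) ∂mup = ∑ i ∈ B, ∫ x, spin (x i) ∂mum :=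
      Finset.sum_congr rfl fun i _ => hcoord i
    have hle : ∫ x, indC B x ∂mup ≤ ∫ x, indC B x ∂mum := by linarith
    have heq : ∫ x, indC B x ∂mup = ∫ x, indC B x ∂mum := le_antisymm hle h1
    rw [hind mup B, hind mum B] at heq
    exact (ENNReal.toReal_eq_toReal_iff' (measure_ne_top _ _) (measure_ne_top _ _)).mp heq
  -- the cylinders generate the σ-algebra
  set C : Set (Set Xsp) := {s | ∃ B : Finset ℕ, s = cyl B} with hC
  have hgen : (inferInstance : MeasurableSpace Xsp) = MeasurableSpace.generateFrom C := by
    refine le_antisymm ?_ (MeasurableSpace.generateFrom_le ?_)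
    · refine iSup_le fun i => ?_
      rw [← measurable_iff_comap_le]
      refine @measurable_to_countable' Bool Xsp inferInstance inferInstance
        (MeasurableSpace.generateFrom C) _ (fun b => ?_)
      cases b with
      | true =>
        have : (fun x : Xsp => x i) ⁻¹' {true} = cyl {i} := by
          ext x; simp [cyl]
        rw [this]
        exact MeasurableSpace.measurableSet_generateFrom (show cyl {i} ∈ C from ⟨{i}, rfl⟩)
      | false =>
        have : (fun x : Xsp => x i) ⁻¹' {false} = (cyl {i})ᶜ := by
          ext x; simp [cyl]
        rw [this]
        exact (MeasurableSpace.measurableSet_generateFrom (show cyl {i} ∈ C from ⟨{i}, rfl⟩)).compl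
    · rintro s ⟨B, rfl⟩
      exact measurableSet_cyl B
  have hpi : IsPiSystem C := by
    rintro s ⟨B1, rfl⟩ t ⟨B2, rfl⟩ -
    refine ⟨B1 ∪ B2, ?_⟩
    ext x
    simp only [cyl, Set.mem_inter_iff, Set.mem_setOf_eq, Finset.mem_union]
    constructor
    · rintro ⟨h1, h2⟩ i (hi | hi); exacts [h1 i hi, h2 i hi]
    · intro h; exact ⟨fun i hi => h i (Or.inl hi), fun i hi => h i (Or.inr hi)⟩
  refine ext_of_generate_finite C hgen hpi ?_ ?_
  · rintro s ⟨B, rfl⟩; exact key B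
  · simp
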